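/- Let A and B be k×k symmetric positive semidefinite real matrices with B positive definite. Then ‖A^{1/2} − B^{1/2}‖ ≤ ‖A − B‖ · ‖B^{-1}‖^{1/2}, where ‖·‖ denotes the operator norm. -/

import Mathlib

open scoped Matrix.Norms.L2Operator

open scoped ComplexOrder in
/-- The positive semidefinite square root of a positive semidefinite matrix, as defined in the
older Mathlib (removed since). -/
noncomputable def Matrix.PosSemidef.sqrt {n 𝕜 : Type*} [Fintype n] [DecidableEq n] [RCLike 𝕜]
    {A : Matrix n n 𝕜} (hA : A.PosSemidef) : Matrix n n 𝕜 :=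
  hA.1.eigenvectorUnitary.1 * Matrix.diagonal ((↑) ∘ (√·) ∘ hA.1.eigenvalues) *
  (star hA.1.eigenvectorUnitary : Matrix n n 𝕜)

lemma Matrix.PosSemidef.posSemidef_sqrt {n : Type*} [Fintype n] [DecidableEq n]
    {A : Matrix n n ℝ} (hA : A.PosSemidef) : hA.sqrt.PosSemidef := by
  unfold Matrix.PosSemidef.sqrt
  rw [Matrix.star_eq_conjTranspose]
  exact (Matrix.posSemidef_diagonal_iff.2 (fun i => by simp [Real.sqrt_nonneg])).mul_mul_conjTranspose_same _

lemma Matrix.PosSemidef.sqrt_mul_self {n : Type*} [Fintype n] [DecidableEq n]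
    {A : Matrix n n ℝ} (hA : A.PosSemidef) : hA.sqrt * hA.sqrt = A := by
  unfold Matrix.PosSemidef.sqrt
  have hU : (star hA.1.eigenvectorUnitary : Matrix n n ℝ) * (hA.1.eigenvectorUnitary : Matrix n n ℝ) = 1 :=
    Unitary.coe_star_mul_self _
  conv_rhs => rw [hA.1.spectral_theorem, Unitary.conjStarAlgAut_apply]
  calc _ = (hA.1.eigenvectorUnitary : Matrix n n ℝ) * (Matrix.diagonal ((RCLike.ofReal : ℝ → ℝ) ∘ (√·) ∘ hA.1.eigenvalues) *
        ((star hA.1.eigenvectorUnitary : Matrix n n ℝ) * (hA.1.eigenvectorUnitary : Matrix n n ℝ)) *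
        Matrix.diagonal ((RCLike.ofReal : ℝ → ℝ) ∘ (√·) ∘ hA.1.eigenvalues)) * (star hA.1.eigenvectorUnitary : Matrix n n ℝ) := by
        simp only [Matrix.mul_assoc]
    _ = _ := by
        rw [hU, Matrix.mul_one, Matrix.diagonal_mul_diagonal]
        congr 3
        ext i
        simp [Real.mul_self_sqrt (hA.eigenvalues_nonneg i)]
open scoped Matrix

open Matrix in
/-- For a real symmetric matrix, if all eigenvalues are bounded by `c` in absolute value,
then the operator norm is at most `c`. -/
private lemma aux_norm_le_of_eigenvalues {k : ℕ} {M : Matrix (Fin k) (Fin k) ℝ}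
    (hM : M.IsHermitian) {c : ℝ} (hc : 0 ≤ c)
    (h : ∀ i, |hM.eigenvalues i| ≤ c) : ‖M‖ ≤ c := by
  rw [Matrix.l2_opNorm_def]
  refine ContinuousLinearMap.opNorm_le_bound _ hc fun x => ?_
  set b := hM.eigenvectorBasis with hb
  have hsymm := (Matrix.isHermitian_iff_isSymmetric.1 hM)
  have key : ∀ i, b.repr (Matrix.toEuclideanLin M x) i
      = hM.eigenvalues i * b.repr x i := by
    intro i
    have hbi : Matrix.toEuclideanLin M (b i) = hM.eigenvalues i • b i := by
      apply (WithLp.equiv 2 (Fin k → ℝ)).injective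
      simpa [Matrix.toEuclideanLin_apply] using hM.mulVec_eigenvectorBasis i
    rw [OrthonormalBasis.repr_apply_apply, OrthonormalBasis.repr_apply_apply,
      ← hsymm (b i) x, hbi, inner_smul_left]
    simp
  have hTx : ‖Matrix.toEuclideanLin M x‖ ≤ c * ‖x‖ := by
    rw [← b.repr.norm_map (Matrix.toEuclideanLin M x), ← b.repr.norm_map x,
      EuclideanSpace.norm_eq, EuclideanSpace.norm_eq]
    have step : ∀ i ∈ Finset.univ, ‖b.repr (Matrix.toEuclideanLin M x) i‖ ^ 2
        ≤ c ^ 2 * ‖b.repr x i‖ ^ 2 := by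
      intro i _
      rw [key i]
      have h1 : |hM.eigenvalues i| ^ 2 ≤ c ^ 2 :=
        pow_le_pow_left₀ (abs_nonneg _) (h i) 2
      have h2 : (0:ℝ) ≤ ‖b.repr x i‖ ^ 2 := sq_nonneg _
      calc ‖hM.eigenvalues i * b.repr x i‖ ^ 2
          = |hM.eigenvalues i| ^ 2 * ‖b.repr x i‖ ^ 2 := by
            rw [norm_mul, mul_pow]; rfl
        _ ≤ c ^ 2 * ‖b.repr x i‖ ^ 2 := mul_le_mul_of_nonneg_right h1 h2
    calc Real.sqrt (∑ i, ‖b.repr (Matrix.toEuclideanLin M x) i‖ ^ 2)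
        ≤ Real.sqrt (∑ i, c ^ 2 * ‖b.repr x i‖ ^ 2) :=
          Real.sqrt_le_sqrt (Finset.sum_le_sum step)
      _ = c * Real.sqrt (∑ i, ‖b.repr x i‖ ^ 2) := by
          rw [← Finset.mul_sum, Real.sqrt_mul (sq_nonneg c), Real.sqrt_sq hc]
  simpa using hTx

/-- for PSD `A` and PD `B`, `‖A^{1/2} − B^{1/2}‖ ≤ ‖A − B‖·‖B⁻¹‖^{1/2}`
in operator norm. -/
theorem stmt_1 {k : ℕ} (A B : Matrix (Fin k) (Fin k) ℝ)
    (hA : A.PosSemidef) (hB : B.PosDef) :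
    ‖hA.sqrt - hB.posSemidef.sqrt‖ ≤ ‖A - B‖ * Real.sqrt ‖B⁻¹‖ := by
  have hsB : (0:ℝ) ≤ Real.sqrt ‖B⁻¹‖ := Real.sqrt_nonneg _
  rcases Nat.eq_zero_or_pos k with hk | hk
  · subst hk
    have h0 : hA.sqrt - hB.posSemidef.sqrt = 0 := Subsingleton.elim _ _
    rw [h0, norm_zero]
    positivity
  set P := hA.sqrt with hPdef
  set Q := hB.posSemidef.sqrt with hQdef
  have hP : P.PosSemidef := hA.posSemidef_sqrt
  have hQ : Q.PosSemidef := hB.posSemidef.posSemidef_sqrt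
  have hPP : P * P = A := hA.sqrt_mul_self
  have hQQ : Q * Q = B := hB.posSemidef.sqrt_mul_self
  set S := P - Q with hSdef
  have hS : S.IsHermitian := hP.isHermitian.sub hQ.isHermitian
  obtain ⟨i₀, -, hi₀⟩ := Finset.exists_max_image Finset.univ
    (fun i => |hS.eigenvalues i|) ⟨⟨0, hk⟩, Finset.mem_univ _⟩
  set μ := hS.eigenvalues i₀ with hμdef
  have hnormS : ‖S‖ ≤ |μ| :=
    aux_norm_le_of_eigenvalues hS (abs_nonneg _) (fun i => hi₀ i (Finset.mem_univ i))
  set vE := hS.eigenvectorBasis i₀ with hvEdef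
  set v : Fin k → ℝ := (WithLp.equiv 2 (Fin k → ℝ)) vE with hvdef
  have hv1 : ‖vE‖ = 1 := hS.eigenvectorBasis.orthonormal.1 i₀
  have hSv : S *ᵥ v = μ • v := hS.mulVec_eigenvectorBasis i₀
  -- symmetry of S on dot products
  have hST : Sᵀ = S := by
    have h' := hS
    rwa [Matrix.IsHermitian, Matrix.conjTranspose_eq_transpose_of_trivial] at h'
  have hdotS : ∀ w : Fin k → ℝ, v ⬝ᵥ (S *ᵥ w) = μ * (v ⬝ᵥ w) := by
    intro w
    rw [Matrix.dotProduct_mulVec, ← Matrix.mulVec_transpose, hST, hSv,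
      smul_dotProduct, smul_eq_mul]
  -- key identity
  have hAB : A - B = P * S + S * Q := by
    have h' : P * S + S * Q = P * P - Q * Q := by
      rw [hSdef, Matrix.mul_sub, Matrix.sub_mul]; abel
    rw [h', hPP, hQQ]
  have e1 : v ⬝ᵥ ((A - B) *ᵥ v) = μ * (v ⬝ᵥ (P *ᵥ v)) + μ * (v ⬝ᵥ (Q *ᵥ v)) := by
    rw [hAB, Matrix.add_mulVec, dotProduct_add, ← Matrix.mulVec_mulVec,
      ← Matrix.mulVec_mulVec, hSv, Matrix.mulVec_smul, dotProduct_smul,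
      hdotS (Q *ᵥ v)]
    simp [mul_comm]
  set p := v ⬝ᵥ (P *ᵥ v) with hpdef
  set t := v ⬝ᵥ (Q *ᵥ v) with htdef
  have hp0 : 0 ≤ p := by simpa using hP.dotProduct_mulVec_nonneg v
  have ht0 : 0 ≤ t := by simpa using hQ.dotProduct_mulVec_nonneg v
  -- dot product vs inner product
  have hinner : ∀ y : Fin k → ℝ,
      v ⬝ᵥ y = inner ℝ vE ((WithLp.equiv 2 (Fin k → ℝ)).symm y) := by
    intro y
    simp [PiLp.inner_apply, dotProduct, hvdef, mul_comm]
  -- |v ⬝ᵥ (A-B) v| ≤ ‖A - B‖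
  have e4 : |v ⬝ᵥ ((A - B) *ᵥ v)| ≤ ‖A - B‖ := by
    rw [hinner]
    calc |inner ℝ vE ((WithLp.equiv 2 (Fin k → ℝ)).symm ((A - B) *ᵥ v))|
        ≤ ‖vE‖ * ‖(WithLp.equiv 2 (Fin k → ℝ)).symm ((A - B) *ᵥ v)‖ :=
          abs_real_inner_le_norm _ _
      _ ≤ ‖vE‖ * (‖A - B‖ * ‖vE‖) := by
          apply mul_le_mul_of_nonneg_left _ (norm_nonneg _)
          exact Matrix.l2_opNorm_mulVec (A - B) vE
      _ = ‖A - B‖ := by rw [hv1]; ring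
  -- lower bound on t
  set R := hQ.sqrt with hRdef
  have hR : R.PosSemidef := hQ.posSemidef_sqrt
  have hRR : R * R = Q := hQ.sqrt_mul_self
  have hdetB : B.det ≠ 0 := hB.det_pos.ne'
  have hdetQ : Q.det ≠ 0 := by
    intro h'
    apply hdetB
    rw [← hQQ, Matrix.det_mul, h', mul_zero]
  have hdetR : R.det ≠ 0 := by
    intro h'
    apply hdetQ
    rw [← hRR, Matrix.det_mul, h', mul_zero]
  have hRunit : IsUnit R.det := isUnit_iff_ne_zero.mpr hdetR
  have hRT : Rᵀ = R := by
    have h' := hR.isHermitian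
    rwa [Matrix.IsHermitian, Matrix.conjTranspose_eq_transpose_of_trivial] at h'
  -- t = ‖R v‖²
  set w : Fin k → ℝ := R *ᵥ v with hwdef
  set wE := (WithLp.equiv 2 (Fin k → ℝ)).symm w with hwEdef
  have htw : t = w ⬝ᵥ w := by
    rw [htdef, ← hRR, ← Matrix.mulVec_mulVec, Matrix.dotProduct_mulVec,
      ← Matrix.mulVec_transpose, hRT]
  have hwnorm : t = ‖wE‖ ^ 2 := by
    rw [htw, ← real_inner_self_eq_norm_sq, hwEdef, PiLp.inner_apply]
    simp [dotProduct, sq]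
  -- 1 ≤ ‖R⁻¹‖ * ‖wE‖
  have hv_eq : v = R⁻¹ *ᵥ w := by
    rw [hwdef, Matrix.mulVec_mulVec, Matrix.nonsing_inv_mul R hRunit, Matrix.one_mulVec]
  have h1le : 1 ≤ ‖R⁻¹‖ * ‖wE‖ := by
    calc (1:ℝ) = ‖vE‖ := hv1.symm
      _ = ‖(WithLp.equiv 2 (Fin k → ℝ)).symm (R⁻¹ *ᵥ wE)‖ := by
          have heq : vE = (WithLp.equiv 2 (Fin k → ℝ)).symm (R⁻¹ *ᵥ wE) := by
            apply (WithLp.equiv 2 (Fin k → ℝ)).injective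
            simpa [hwEdef, hvdef, Equiv.apply_symm_apply] using hv_eq
          rw [heq]
      _ ≤ ‖R⁻¹‖ * ‖wE‖ := Matrix.l2_opNorm_mulVec R⁻¹ wE
  -- ‖R⁻¹‖² = ‖Q⁻¹‖ and ‖Q⁻¹‖² = ‖B⁻¹‖
  have hRiH : (R⁻¹)ᴴ = R⁻¹ := by
    rw [Matrix.conjTranspose_nonsing_inv, hR.isHermitian.eq]
  have hnormQi : ‖Q⁻¹‖ = ‖R⁻¹‖ * ‖R⁻¹‖ := by
    rw [← Matrix.l2_opNorm_conjTranspose_mul_self R⁻¹, hRiH, ← Matrix.mul_inv_rev, hRR]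
  have hQiH : (Q⁻¹)ᴴ = Q⁻¹ := by
    rw [Matrix.conjTranspose_nonsing_inv, hQ.isHermitian.eq]
  have hnormBi : ‖B⁻¹‖ = ‖Q⁻¹‖ * ‖Q⁻¹‖ := by
    rw [← Matrix.l2_opNorm_conjTranspose_mul_self Q⁻¹, hQiH, ← Matrix.mul_inv_rev, hQQ]
  have hsqrtBi : Real.sqrt ‖B⁻¹‖ = ‖R⁻¹‖ * ‖R⁻¹‖ := by
    rw [hnormBi, hnormQi,
      show (‖R⁻¹‖ * ‖R⁻¹‖) * (‖R⁻¹‖ * ‖R⁻¹‖) = (‖R⁻¹‖ * ‖R⁻¹‖) ^ 2 by ring]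
    exact Real.sqrt_sq (mul_nonneg (norm_nonneg _) (norm_nonneg _))
  have e3 : 1 ≤ t * Real.sqrt ‖B⁻¹‖ := by
    rw [hsqrtBi, hwnorm]
    nlinarith [norm_nonneg wE, norm_nonneg (R⁻¹), h1le]
  -- combine
  have hμt : |μ| * t ≤ ‖A - B‖ := by
    calc |μ| * t ≤ |μ| * (p + t) := by
          apply mul_le_mul_of_nonneg_left _ (abs_nonneg _)
          linarith
      _ = |μ * (p + t)| := by
          rw [abs_mul, abs_of_nonneg (by linarith : (0:ℝ) ≤ p + t)]
      _ = |v ⬝ᵥ ((A - B) *ᵥ v)| := by rw [e1]; ring_nf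
      _ ≤ ‖A - B‖ := e4
  calc ‖S‖ ≤ |μ| := hnormS
    _ ≤ |μ| * (t * Real.sqrt ‖B⁻¹‖) := le_mul_of_one_le_right (abs_nonneg _) e3
    _ = (|μ| * t) * Real.sqrt ‖B⁻¹‖ := by ring
    _ ≤ ‖A - B‖ * Real.sqrt ‖B⁻¹‖ := mul_le_mul_of_nonneg_right hμt hsB
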